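/- If X is second-countable and satisfies that the strict-order relation is open and every point is in the closure of its strict down-set, then the space 𝒮 of closed lower subsets of X with the Fell-induced topology is second-countable, compact, Hausdorff, and hence metrizable. -/

import Mathlib

open Set TopologicalSpace

/-- `H` is a lower set with respect to the strict order: `x ∈ H` and `y < x` imply `y ∈ H`. -/
def IsLowerLt {X : Type*} [LT X] (H : Set X) : Prop :=
  ∀ ⦃x⦄, x ∈ H → ∀ ⦃y⦄, y < x → y ∈ H

/-- The space `𝒮` of topologically closed lower subsets of `X`. -/
def SSpace (X : Type*) [TopologicalSpace X] [LT X] : Type _ :=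
  {S : Set X // IsClosed S ∧ IsLowerLt S}

/-- The topology on `𝒮` generated by the sets `V_U = {S : S ∩ U ≠ ∅}` for `U` open and
`V^K = {S : S ∩ K = ∅}` for `K` compact. -/
def STopology (X : Type*) [TopologicalSpace X] [LT X] : TopologicalSpace (SSpace X) :=
  TopologicalSpace.generateFrom
    ({W | ∃ U : Set X, IsOpen U ∧ W = {S : SSpace X | (S.1 ∩ U).Nonempty}} ∪
     {W | ∃ K : Set X, IsCompact K ∧ W = {S : SSpace X | S.1 ∩ K = ∅}})

/-- The generating family of the topology on `𝒮`. -/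
def SGen (X : Type*) [TopologicalSpace X] [LT X] : Set (Set (SSpace X)) :=
  {W | ∃ U : Set X, IsOpen U ∧ W = {S : SSpace X | (S.1 ∩ U).Nonempty}} ∪
  {W | ∃ K : Set X, IsCompact K ∧ W = {S : SSpace X | S.1 ∩ K = ∅}}

lemma STopology_eq_generateFrom (X : Type*) [TopologicalSpace X] [LT X] :
    STopology X = TopologicalSpace.generateFrom (SGen X) := rfl

section Aux

variable {X : Type*} [TopologicalSpace X] [PartialOrder X]

/-- The space `𝒮` is compact. -/
lemma sspace_compactSpace (hR : IsOpen {p : X × X | p.1 < p.2}) :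
    @CompactSpace (SSpace X) (STopology X) := by
  rw [STopology_eq_generateFrom]
  letI : TopologicalSpace (SSpace X) := TopologicalSpace.generateFrom (SGen X)
  constructor
  rw [isCompact_iff_ultrafilter_le_nhds]
  intro 𝒰 _
  set S₀set : Set X :=
    {x | ∀ U : Set X, IsOpen U → x ∈ U → {S : SSpace X | (S.1 ∩ U).Nonempty} ∈ 𝒰} with hS₀set
  have hcl : IsClosed S₀set := by
    rw [← isOpen_compl_iff]
    refine isOpen_iff_forall_mem_open.2 fun x hx => ?_
    simp only [mem_compl_iff, hS₀set, mem_setOf_eq, not_forall] at hx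
    obtain ⟨U, hUo, hxU, hU⟩ := hx
    refine ⟨U, fun y hyU hy => hU (hy U hUo hyU), hUo, hxU⟩
  have hlow : IsLowerLt S₀set := by
    intro x hx y hy U hUo hyU
    have hBo : IsOpen {b : X | y < b} := hR.preimage (Continuous.prodMk_right y)
    have hVB := hx _ hBo hy
    refine Filter.mem_of_superset hVB ?_
    rintro S ⟨b, hbS, hbB⟩
    exact ⟨y, S.2.2 hbS hbB, hyU⟩
  refine ⟨⟨S₀set, hcl, hlow⟩, mem_univ _, ?_⟩
  erw [nhds_generateFrom]
  refine le_iInf₂ fun s hs => Filter.le_principal_iff.2 ?_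
  obtain ⟨hmem, hgen⟩ := hs
  rcases hgen with ⟨U, hUo, rfl⟩ | ⟨K, hK, rfl⟩
  · obtain ⟨x, hxS, hxU⟩ := hmem
    exact hxS U hUo hxU
  · have hmem' : S₀set ∩ K = ∅ := hmem
    have hxK : ∀ x : X, ∃ U : Set X, IsOpen U ∧
        (x ∈ K → x ∈ U ∧ {S : SSpace X | (S.1 ∩ U).Nonempty} ∉ 𝒰) := by
      intro x
      by_cases hx : x ∈ K
      · have hxS : x ∉ S₀set := fun h => (eq_empty_iff_forall_notMem.1 hmem' x) ⟨h, hx⟩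
        simp only [hS₀set, mem_setOf_eq, not_forall] at hxS
        obtain ⟨U, hUo, hxU, hU⟩ := hxS
        exact ⟨U, hUo, fun _ => ⟨hxU, hU⟩⟩
      · exact ⟨∅, isOpen_empty, fun h => absurd h hx⟩
    choose U hUo hU using hxK
    obtain ⟨t, htK, hcover⟩ := hK.elim_nhds_subcover U
      (fun x hx => (hUo x).mem_nhds (hU x hx).1)
    have hmem𝒰 : (⋂ x ∈ t, {S : SSpace X | S.1 ∩ U x = ∅}) ∈ 𝒰 := by
      refine (Filter.biInter_mem t.finite_toSet).2 fun x hx => ?_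
      have hnot := (hU x (htK x hx)).2
      have hcompl : {S : SSpace X | S.1 ∩ U x = ∅} =
          {S : SSpace X | (S.1 ∩ U x).Nonempty}ᶜ := by
        ext S; simp [Set.not_nonempty_iff_eq_empty]
      rw [hcompl]
      exact (Ultrafilter.compl_mem_iff_notMem).2 hnot
    refine Filter.mem_of_superset hmem𝒰 ?_
    intro S hS
    simp only [mem_iInter, mem_setOf_eq] at hS ⊢
    apply eq_empty_iff_forall_notMem.2
    rintro y ⟨hyS, hyK⟩
    obtain ⟨x, hxt, hyU⟩ := mem_iUnion₂.1 (hcover hyK)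
    exact (eq_empty_iff_forall_notMem.1 (hS x hxt)) y ⟨hyS, hyU⟩

/-- Separation of distinct points of `𝒮` by subbasic sets from a countable family. -/
lemma sspace_sep [SecondCountableTopology X] {D : Set X} (hD : Dense D)
    (hR : IsOpen {p : X × X | p.1 < p.2}) (hsb : ∀ x : X, x ∈ closure {y | y < x})
    {S T : SSpace X} {x : X} (hxS : x ∈ S.1) (hxT : x ∉ T.1) :
    ∃ B ∈ countableBasis X, ∃ d ∈ D,
      (S.1 ∩ B).Nonempty ∧ T.1 ∩ ({d} : Set X) = ∅ ∧
      Disjoint {S' : SSpace X | (S'.1 ∩ B).Nonempty}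
        {S' : SSpace X | S'.1 ∩ ({d} : Set X) = ∅} := by
  have hTc : IsOpen T.1ᶜ := T.2.1.isOpen_compl
  have hx := hsb x
  rw [mem_closure_iff] at hx
  obtain ⟨z, hzTc, hzlt⟩ := hx T.1ᶜ hTc hxT
  obtain ⟨A, B, hAo, hBo, hzA, hxB, hAB⟩ := isOpen_prod_iff.1 hR z x hzlt
  obtain ⟨B', hB'mem, hxB', hB'sub⟩ :=
    (isBasis_countableBasis X).exists_subset_of_mem_open hxB hBo
  obtain ⟨d, hdD, hdA, hdTc⟩ : ∃ d ∈ D, d ∈ A ∧ d ∈ T.1ᶜ := by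
    obtain ⟨d, hdD, hd⟩ := hD.exists_mem_open (hAo.inter hTc) ⟨z, hzA, hzTc⟩
    exact ⟨d, hdD, hd.1, hd.2⟩
  refine ⟨B', hB'mem, d, hdD, ⟨x, hxS, hxB'⟩, ?_, ?_⟩
  · apply eq_empty_iff_forall_notMem.2
    rintro y ⟨hyT, rfl⟩
    exact hdTc hyT
  · rw [Set.disjoint_left]
    rintro S' ⟨b, hbS', hbB'⟩ hS'd
    have hdb' : (⟨d, b⟩ : X × X) ∈ {p : X × X | p.1 < p.2} := hAB ⟨hdA, hB'sub hbB'⟩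
    have hdb : d < b := hdb'
    have hdS' : d ∈ S'.1 := S'.2.2 hbS' hdb
    exact (eq_empty_iff_forall_notMem.1 hS'd) d ⟨hdS', rfl⟩

end Aux

/-- If `X` is second-countable, the strict-order relation is open, and every point lies in
the closure of its strict down-set, then the space of closed lower subsets with the
topology generated by `V_U` and `V^K` is second-countable, compact, Hausdorff,
and hence metrizable. -/
theorem sspace_secondCountable_compact_t2_metrizable
    (X : Type*) [TopologicalSpace X] [SecondCountableTopology X] [PartialOrder X]
    (hR : IsOpen {p : X × X | p.1 < p.2})
    (hsb : ∀ x : X, x ∈ closure {y | y < x}) :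
    @SecondCountableTopology (SSpace X) (STopology X) ∧
    @CompactSpace (SSpace X) (STopology X) ∧
    @T2Space (SSpace X) (STopology X) ∧
    @MetrizableSpace (SSpace X) (STopology X) := by
  obtain ⟨D, hDc, hDd⟩ := TopologicalSpace.exists_countable_dense X
  set g₀ : Set (Set (SSpace X)) :=
    ((fun B : Set X => {S : SSpace X | (S.1 ∩ B).Nonempty}) '' countableBasis X) ∪
    ((fun d : X => {S : SSpace X | S.1 ∩ ({d} : Set X) = ∅}) '' D) with hg₀
  have hg₀c : g₀.Countable := ((countable_countableBasis X).image _).union (hDc.image _)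
  have hg₀sub : g₀ ⊆ SGen X := by
    rintro W (⟨B, hB, rfl⟩ | ⟨d, hd, rfl⟩)
    · exact Or.inl ⟨B, isOpen_of_mem_countableBasis hB, rfl⟩
    · exact Or.inr ⟨{d}, isCompact_singleton, rfl⟩
  have hcpt : @CompactSpace (SSpace X) (STopology X) := sspace_compactSpace hR
  have ht2' : @T2Space (SSpace X) (TopologicalSpace.generateFrom g₀) := by
    letI : TopologicalSpace (SSpace X) := TopologicalSpace.generateFrom g₀
    refine ⟨fun S T hST => ?_⟩
    have hne : ¬(S.1 ⊆ T.1 ∧ T.1 ⊆ S.1) := fun ⟨h1, h2⟩ =>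
      hST (Subtype.ext (le_antisymm h1 h2))
    rcases not_and_or.1 hne with h | h
    · obtain ⟨x, hxS, hxT⟩ := not_subset.1 h
      obtain ⟨B, hB, d, hd, hSB, hTd, hdisj⟩ := sspace_sep hDd hR hsb hxS hxT
      exact ⟨_, _, isOpen_generateFrom_of_mem (Or.inl ⟨B, hB, rfl⟩),
        isOpen_generateFrom_of_mem (Or.inr ⟨d, hd, rfl⟩), hSB, hTd, hdisj⟩
    · obtain ⟨x, hxT, hxS⟩ := not_subset.1 h
      obtain ⟨B, hB, d, hd, hTB, hSd, hdisj⟩ := sspace_sep hDd hR hsb hxT hxS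
      exact ⟨_, _, isOpen_generateFrom_of_mem (Or.inr ⟨d, hd, rfl⟩),
        isOpen_generateFrom_of_mem (Or.inl ⟨B, hB, rfl⟩), hSd, hTB, hdisj.symm⟩
  have hle : STopology X ≤ TopologicalSpace.generateFrom g₀ := by
    rw [STopology_eq_generateFrom]
    exact TopologicalSpace.generateFrom_anti hg₀sub
  have heq : STopology X = TopologicalSpace.generateFrom g₀ := by
    refine le_antisymm hle ?_
    rw [TopologicalSpace.le_def]
    intro U hU
    have hUc : @IsClosed _ (STopology X) Uᶜ := by
      rw [@isClosed_compl_iff _ (STopology X)]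
      exact hU
    have hcptU : @IsCompact _ (STopology X) Uᶜ :=
      @IsClosed.isCompact _ (STopology X) _ hcpt hUc
    have hcptU' : @IsCompact _ (TopologicalSpace.generateFrom g₀) Uᶜ := by
      have himg := @IsCompact.image _ _ (STopology X) (TopologicalSpace.generateFrom g₀)
        Uᶜ id hcptU (continuous_id_of_le hle)
      rwa [Set.image_id] at himg
    have hUc' : @IsClosed _ (TopologicalSpace.generateFrom g₀) Uᶜ :=
      @IsCompact.isClosed _ (TopologicalSpace.generateFrom g₀) ht2' _ hcptU'
    exact (@isClosed_compl_iff _ (TopologicalSpace.generateFrom g₀) U).1 hUc'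
  have hsc : @SecondCountableTopology (SSpace X) (STopology X) := by
    rw [heq]
    letI : TopologicalSpace (SSpace X) := TopologicalSpace.generateFrom g₀
    have hb := isTopologicalBasis_of_subbasis (s := g₀) rfl
    exact hb.secondCountableTopology ((countable_setOf_finite_subset hg₀c).image _)
  have ht2 : @T2Space (SSpace X) (STopology X) := by rw [heq]; exact ht2'
  refine ⟨hsc, hcpt, ht2, ?_⟩
  letI : TopologicalSpace (SSpace X) := STopology X
  haveI := hsc; haveI := hcpt; haveI := ht2
  infer_instance
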